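/- Every stochastically increasing bivariate copula C satisfies ξ(C) ≤ (3/4)·τ(C) + 1/4. -/

import Mathlib

open MeasureTheory Set Filter Topology

noncomputable section

def IsCopula (C : ℝ → ℝ → ℝ) : Prop :=
  (∀ u ∈ Icc (0:ℝ) 1, ∀ v ∈ Icc (0:ℝ) 1, C u v ∈ Icc (0:ℝ) 1) ∧
  (∀ u ∈ Icc (0:ℝ) 1, C u 0 = 0 ∧ C u 1 = u) ∧
  (∀ v ∈ Icc (0:ℝ) 1, C 0 v = 0 ∧ C 1 v = v) ∧
  (∀ u₁ ∈ Icc (0:ℝ) 1, ∀ u₂ ∈ Icc (0:ℝ) 1, ∀ v₁ ∈ Icc (0:ℝ) 1, ∀ v₂ ∈ Icc (0:ℝ) 1,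
    u₁ ≤ u₂ → v₁ ≤ v₂ → 0 ≤ C u₂ v₂ - C u₁ v₂ - C u₂ v₁ + C u₁ v₁)

/-- The (a.e. defined) partial derivative of `C` with respect to its first argument. -/
def d1 (C : ℝ → ℝ → ℝ) (t v : ℝ) : ℝ := deriv (fun s => C s v) t

/-- Chatterjee's rank correlation. -/
def xi (C : ℝ → ℝ → ℝ) : ℝ :=
  6 * (∫ v in (0:ℝ)..1, ∫ t in (0:ℝ)..1, (d1 C t v) ^ 2) - 2

/-- Spearman's footrule. -/
def psi (C : ℝ → ℝ → ℝ) : ℝ :=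
  6 * (∫ v in (0:ℝ)..1, C v v) - 2

/-- Stochastically increasing: for each `v`, `t ↦ ∂₁C(t,v)` agrees a.e. on `[0,1]`
with a non-increasing function. -/
def IsSI (C : ℝ → ℝ → ℝ) : Prop :=
  ∀ v ∈ Icc (0:ℝ) 1, ∃ g : ℝ → ℝ, AntitoneOn g (Icc (0:ℝ) 1) ∧
    (∀ᵐ t ∂(volume.restrict (Icc (0:ℝ) 1)), d1 C t v = g t)

/-- The (a.e. defined) partial derivative of `C` with respect to its second argument. -/
def d2 (C : ℝ → ℝ → ℝ) (u v : ℝ) : ℝ := deriv (fun s => C u s) v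

/-- Kendall's tau. -/
def tau (C : ℝ → ℝ → ℝ) : ℝ :=
  1 - 4 * (∫ v in (0:ℝ)..1, ∫ u in (0:ℝ)..1, d1 C u v * d2 C u v)

namespace SIAux

def cl (x : ℝ) : ℝ := max 0 (min x 1)

lemma cl_mem (x : ℝ) : cl x ∈ Icc (0:ℝ) 1 :=
  ⟨le_max_left _ _, max_le (by norm_num) (min_le_right _ _)⟩

lemma cl_eq {x : ℝ} (hx : x ∈ Icc (0:ℝ) 1) : cl x = x := by
  unfold cl; rw [min_eq_left hx.2, max_eq_right hx.1]

lemma cl_mono : Monotone cl := fun x y h => max_le_max le_rfl (min_le_min h le_rfl)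

lemma cl_lip {x y : ℝ} (h : x ≤ y) : cl y - cl x ≤ y - x := by
  unfold cl
  simp only [max_def, min_def]
  split_ifs <;> linarith

/-- derivative of a monotone sub-1-Lipschitz function lies in `[0,1]`. -/
lemma deriv_mem {F : ℝ → ℝ} (hm : Monotone F)
    (hl : ∀ ⦃a b : ℝ⦄, a ≤ b → F b - F a ≤ b - a) (t : ℝ) :
    deriv F t ∈ Icc (0:ℝ) 1 := by
  by_cases hd : DifferentiableAt ℝ F t
  · have hs := hasDerivAt_iff_tendsto_slope.1 hd.hasDerivAt
    have hmono : 𝓝[>] t ≤ 𝓝[≠] t :=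
      nhdsWithin_mono t (fun x hx => ne_of_gt hx)
    have hs' : Tendsto (slope F t) (𝓝[>] t) (𝓝 (deriv F t)) := hs.mono_left hmono
    constructor
    · refine ge_of_tendsto hs' ?_
      filter_upwards [self_mem_nhdsWithin] with x hx
      have hx' : (0:ℝ) < x - t := sub_pos.2 hx
      rw [slope_def_field]
      exact div_nonneg (sub_nonneg.2 (hm (le_of_lt hx))) hx'.le
    · refine le_of_tendsto hs' ?_
      filter_upwards [self_mem_nhdsWithin] with x hx
      have hx' : (0:ℝ) < x - t := sub_pos.2 hx
      rw [slope_def_field]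
      exact (div_le_one hx').2 (hl (le_of_lt hx))
  · rw [deriv_zero_of_not_differentiableAt hd]
    exact ⟨le_rfl, zero_le_one⟩

lemma ofReal_deriv_le_liminf {F : ℝ → ℝ} (hm : Monotone F) (t : ℝ) :
    ENNReal.ofReal (deriv F t) ≤
      Filter.liminf
        (fun n : ℕ => ENNReal.ofReal ((F (t + 1 / ((n:ℝ) + 1)) - F t) * ((n:ℝ) + 1)))
        Filter.atTop := by
  by_cases hd : DifferentiableAt ℝ F t
  · have hs := hasDerivAt_iff_tendsto_slope.1 hd.hasDerivAt
    have hseq : Tendsto (fun n : ℕ => t + 1 / ((n:ℝ) + 1)) atTop (𝓝[≠] t) := by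
      rw [tendsto_nhdsWithin_iff]
      constructor
      · have h0 : Tendsto (fun n : ℕ => 1 / ((n:ℝ) + 1)) atTop (𝓝 0) :=
          tendsto_one_div_add_atTop_nhds_zero_nat
        simpa using tendsto_const_nhds.add h0
      · refine Eventually.of_forall fun n => ?_
        have : (0:ℝ) < 1 / ((n:ℝ) + 1) := by positivity
        simp only [mem_compl_iff, mem_singleton_iff]
        intro h
        nlinarith [h]
    have h2 : Tendsto (fun n : ℕ => slope F t (t + 1 / ((n:ℝ) + 1))) atTop (𝓝 (deriv F t)) :=
      hs.comp hseq
    have h3 : ∀ n : ℕ, slope F t (t + 1 / ((n:ℝ) + 1))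
        = (F (t + 1 / ((n:ℝ) + 1)) - F t) * ((n:ℝ) + 1) := by
      intro n
      rw [slope_def_field]
      have hne : ((n:ℝ) + 1) ≠ 0 := by positivity
      rw [add_sub_cancel_left]; field_simp
    have h4 : Tendsto
        (fun n : ℕ => ENNReal.ofReal ((F (t + 1 / ((n:ℝ) + 1)) - F t) * ((n:ℝ) + 1)))
        atTop (𝓝 (ENNReal.ofReal (deriv F t))) := by
      have := (ENNReal.continuous_ofReal.tendsto _).comp h2
      refine this.congr fun n => ?_
      simp only [Function.comp_apply, h3]
    rw [h4.liminf_eq]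
  · rw [deriv_zero_of_not_differentiableAt hd]
    simp


lemma integrableOn_of_bdd {f : ℝ → ℝ} {a b M : ℝ}
    (hf : Measurable f) (hM : ∀ t ∈ Ioc a b, |f t| ≤ M) :
    IntegrableOn f (Ioc a b) := by
  apply Measure.integrableOn_of_bounded (M := M)
  · simp [Real.volume_Ioc]
  · exact hf.aestronglyMeasurable
  · rw [ae_restrict_iff' measurableSet_Ioc]
    exact Eventually.of_forall fun t ht => by rw [Real.norm_eq_abs]; exact hM t ht

/-- Fatou-type fundamental theorem inequality: for a monotone, sub-1-Lipschitz function,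
the integral of its derivative over an interval is at most the increment. -/
lemma integral_deriv_le_core {F : ℝ → ℝ} (hm : Monotone F)
    (hl : ∀ ⦃a b : ℝ⦄, a ≤ b → F b - F a ≤ b - a) {a b : ℝ} (hab : a ≤ b) :
    ∫ t in Ioc a b, deriv F t ≤ F b - F a := by
  set q : ℕ → ℝ → ℝ := fun n t => (F (t + 1 / ((n:ℝ) + 1)) - F t) * ((n:ℝ) + 1) with hq
  have hpos : ∀ n : ℕ, (0:ℝ) < 1 / ((n:ℝ) + 1) := fun n => by positivity
  have hq0 : ∀ n t, 0 ≤ q n t := fun n t =>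
    mul_nonneg (sub_nonneg.2 (hm (le_add_of_nonneg_right (hpos n).le))) (by positivity)
  have hq1 : ∀ n t, q n t ≤ 1 := by
    intro n t
    have h1 : F (t + 1 / ((n:ℝ) + 1)) - F t ≤ 1 / ((n:ℝ) + 1) := by
      have := hl (show t ≤ t + 1 / ((n:ℝ) + 1) from le_add_of_nonneg_right (hpos n).le)
      simpa using this
    have h2 : (0:ℝ) ≤ ((n:ℝ) + 1) := by positivity
    calc q n t ≤ (1 / ((n:ℝ) + 1)) * ((n:ℝ) + 1) := mul_le_mul_of_nonneg_right h1 h2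
      _ = 1 := by field_simp
  have hqm : ∀ n, Measurable (q n) := by
    intro n
    exact ((hm.measurable.comp (measurable_id.add_const _)).sub hm.measurable).mul_const _
  have hqint : ∀ n, IntegrableOn (q n) (Ioc a b) := fun n =>
    integrableOn_of_bdd (hqm n) (M := 1)
      (fun t _ => abs_le.2 ⟨by linarith [hq0 n t], hq1 n t⟩)
  -- integral bound for each n
  have hQbnd : ∀ n : ℕ, ∫ t in Ioc a b, q n t ≤ F b - F a + 1 / ((n:ℝ) + 1) := by
    intro n
    set h : ℝ := 1 / ((n:ℝ) + 1) with hh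
    have hhpos : 0 < h := hpos n
    have hFint : ∀ c d : ℝ, IntervalIntegrable F volume c d := fun c d => hm.intervalIntegrable
    have hFh : Monotone fun t => F (t + h) := fun x y hxy => hm (by linarith)
    have hFhint : IntervalIntegrable (fun t => F (t + h)) volume a b := hFh.intervalIntegrable
    have e0 : ∫ t in Ioc a b, q n t = ∫ t in a..b, q n t :=
      (intervalIntegral.integral_of_le hab).symm
    have e1 : ∫ t in a..b, q n t
        = ((∫ t in a..b, F (t + h)) - ∫ t in a..b, F t) * ((n:ℝ) + 1) := by
      rw [← intervalIntegral.integral_sub hFhint (hFint a b),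
        ← intervalIntegral.integral_mul_const]
    have e2 : (∫ t in a..b, F (t + h)) = ∫ t in (a+h)..(b+h), F t :=
      intervalIntegral.integral_comp_add_right F h
    -- Chasles rearrangement
    have c1 : (∫ t in a..(a+h), F t) + ∫ t in (a+h)..(b+h), F t = ∫ t in a..(b+h), F t :=
      intervalIntegral.integral_add_adjacent_intervals (hFint _ _) (hFint _ _)
    have c2 : (∫ t in a..b, F t) + ∫ t in b..(b+h), F t = ∫ t in a..(b+h), F t :=
      intervalIntegral.integral_add_adjacent_intervals (hFint _ _) (hFint _ _)
    -- endpoint bounds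
    have hub : ∫ t in b..(b+h), F t ≤ h * (F b + h) := by
      have hmono : ∀ t ∈ Icc b (b+h), F t ≤ F b + h := by
        intro t ht
        have h1 : F t ≤ F (b + h) := hm ht.2
        have h2 : F (b + h) - F b ≤ h := by
          have := hl (show b ≤ b + h from le_add_of_nonneg_right hhpos.le); simpa using this
        linarith
      calc ∫ t in b..(b+h), F t ≤ ∫ _ in b..(b+h), (F b + h) :=
            intervalIntegral.integral_mono_on (by linarith) (hFint _ _)
              intervalIntegrable_const hmono
        _ = h * (F b + h) := by rw [intervalIntegral.integral_const, smul_eq_mul]; ring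
    have hlb : h * F a ≤ ∫ t in a..(a+h), F t := by
      have hmono : ∀ t ∈ Icc a (a+h), F a ≤ F t := fun t ht => hm ht.1
      calc h * F a = (a + h - a) • F a := by rw [smul_eq_mul]; ring
        _ = ∫ _ in a..(a+h), F a := (intervalIntegral.integral_const _).symm
        _ ≤ ∫ t in a..(a+h), F t :=
            intervalIntegral.integral_mono_on (by linarith) intervalIntegrable_const
              (hFint _ _) hmono
    have hmul : ((n:ℝ) + 1) * h = 1 := by rw [hh]; field_simp
    have : (∫ t in a..b, F (t + h)) - ∫ t in a..b, F t
        = (∫ t in b..(b+h), F t) - ∫ t in a..(a+h), F t := by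
      rw [e2]; linarith
    rw [e0, e1, this]
    have : ((∫ t in b..(b+h), F t) - ∫ t in a..(a+h), F t) * ((n:ℝ)+1)
        ≤ (h * (F b + h) - h * F a) * ((n:ℝ)+1) := by
      apply mul_le_mul_of_nonneg_right (by linarith) (by positivity)
    calc ((∫ t in b..(b+h), F t) - ∫ t in a..(a+h), F t) * ((n:ℝ)+1)
        ≤ (h * (F b + h) - h * F a) * ((n:ℝ)+1) := this
      _ = F b - F a + h := by
          have : (h * (F b + h) - h * F a) * ((n:ℝ)+1)
              = (((n:ℝ)+1) * h) * (F b - F a) + (((n:ℝ)+1) * h) * h := by ring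
          rw [this, hmul]; ring
  -- now the lintegral/Fatou chain
  have hdm : Measurable (deriv F) := measurable_deriv F
  have hd01 : ∀ t, deriv F t ∈ Icc (0:ℝ) 1 := fun t => deriv_mem hm hl t
  have L1 : ∫ t in Ioc a b, deriv F t
      = (∫⁻ t in Ioc a b, ENNReal.ofReal (deriv F t)).toReal := by
    rw [integral_eq_lintegral_of_nonneg_ae
      (Eventually.of_forall fun t => (hd01 t).1) hdm.aestronglyMeasurable]
  have L2 : (∫⁻ t in Ioc a b, ENNReal.ofReal (deriv F t))
      ≤ ∫⁻ t in Ioc a b, liminf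
          (fun n : ℕ => ENNReal.ofReal ((F (t + 1 / ((n:ℝ) + 1)) - F t) * ((n:ℝ) + 1))) atTop :=
    lintegral_mono fun t => ofReal_deriv_le_liminf hm t
  have L3 : (∫⁻ t in Ioc a b, liminf
        (fun n : ℕ => ENNReal.ofReal ((F (t + 1 / ((n:ℝ) + 1)) - F t) * ((n:ℝ) + 1))) atTop)
      ≤ liminf (fun n : ℕ => ∫⁻ t in Ioc a b, ENNReal.ofReal (q n t)) atTop :=
    lintegral_liminf_le fun n => (hqm n).ennreal_ofReal
  have L4 : ∀ n : ℕ, (∫⁻ t in Ioc a b, ENNReal.ofReal (q n t))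
      = ENNReal.ofReal (∫ t in Ioc a b, q n t) :=
    fun n => (ofReal_integral_eq_lintegral_ofReal (hqint n)
      ((ae_restrict_iff' measurableSet_Ioc).2 (Eventually.of_forall fun t _ => hq0 n t))).symm
  have L5 : liminf (fun n : ℕ => ∫⁻ t in Ioc a b, ENNReal.ofReal (q n t)) atTop
      ≤ ENNReal.ofReal (F b - F a) := by
    have step : liminf (fun n : ℕ => ∫⁻ t in Ioc a b, ENNReal.ofReal (q n t)) atTop
        ≤ liminf (fun n : ℕ => ENNReal.ofReal (F b - F a + 1 / ((n:ℝ) + 1))) atTop := by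
      exact liminf_le_liminf (Eventually.of_forall fun n => by
        rw [L4 n]; exact ENNReal.ofReal_le_ofReal (hQbnd n))
    have lim : Tendsto (fun n : ℕ => ENNReal.ofReal (F b - F a + 1 / ((n:ℝ) + 1))) atTop
        (𝓝 (ENNReal.ofReal (F b - F a))) := by
      have h0 : Tendsto (fun n : ℕ => F b - F a + 1 / ((n:ℝ) + 1)) atTop (𝓝 (F b - F a)) := by
        have := tendsto_one_div_add_atTop_nhds_zero_nat (𝕜 := ℝ)
        simpa using tendsto_const_nhds.add this
      exact (ENNReal.continuous_ofReal.tendsto _).comp h0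
    rw [lim.liminf_eq] at step
    exact step
  rw [L1]
  have hfin : ENNReal.ofReal (F b - F a) ≠ ⊤ := ENNReal.ofReal_ne_top
  have : (∫⁻ t in Ioc a b, ENNReal.ofReal (deriv F t)) ≤ ENNReal.ofReal (F b - F a) :=
    le_trans L2 (le_trans L3 L5)
  calc (∫⁻ t in Ioc a b, ENNReal.ofReal (deriv F t)).toReal
      ≤ (ENNReal.ofReal (F b - F a)).toReal := ENNReal.toReal_mono hfin this
    _ = F b - F a := ENNReal.toReal_ofReal (sub_nonneg.2 (hm hab))

lemma mono1 {C : ℝ → ℝ → ℝ} (hC : IsCopula C) {a b v : ℝ}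
    (ha : a ∈ Icc (0:ℝ) 1) (hb : b ∈ Icc (0:ℝ) 1) (hv : v ∈ Icc (0:ℝ) 1) (hab : a ≤ b) :
    C a v ≤ C b v := by
  have h := hC.2.2.2 a ha b hb 0 ⟨le_refl 0, zero_le_one⟩ v hv hab hv.1
  have h0a := (hC.2.1 a ha).1
  have h0b := (hC.2.1 b hb).1
  linarith

lemma lip1 {C : ℝ → ℝ → ℝ} (hC : IsCopula C) {a b v : ℝ}
    (ha : a ∈ Icc (0:ℝ) 1) (hb : b ∈ Icc (0:ℝ) 1) (hv : v ∈ Icc (0:ℝ) 1) (hab : a ≤ b) :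
    C b v - C a v ≤ b - a := by
  have h := hC.2.2.2 a ha b hb v hv 1 ⟨zero_le_one, le_refl 1⟩ hab hv.2
  have h1a := (hC.2.1 a ha).2
  have h1b := (hC.2.1 b hb).2
  linarith

lemma mono2 {C : ℝ → ℝ → ℝ} (hC : IsCopula C) {u a b : ℝ}
    (hu : u ∈ Icc (0:ℝ) 1) (ha : a ∈ Icc (0:ℝ) 1) (hb : b ∈ Icc (0:ℝ) 1) (hab : a ≤ b) :
    C u a ≤ C u b := by
  have h := hC.2.2.2 0 ⟨le_refl 0, zero_le_one⟩ u hu a ha b hb hu.1 hab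
  have h0a := (hC.2.2.1 a ha).1
  have h0b := (hC.2.2.1 b hb).1
  linarith

lemma lip2 {C : ℝ → ℝ → ℝ} (hC : IsCopula C) {u a b : ℝ}
    (hu : u ∈ Icc (0:ℝ) 1) (ha : a ∈ Icc (0:ℝ) 1) (hb : b ∈ Icc (0:ℝ) 1) (hab : a ≤ b) :
    C u b - C u a ≤ b - a := by
  have h := hC.2.2.2 u hu 1 ⟨zero_le_one, le_refl 1⟩ a ha b hb hu.2 hab
  have h1a := (hC.2.2.1 a ha).2
  have h1b := (hC.2.2.1 b hb).2
  linarith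

/-- the copula, clamped to the unit square. -/
def CT (C : ℝ → ℝ → ℝ) (t v : ℝ) : ℝ := C (cl t) (cl v)

lemma CT_eq {C : ℝ → ℝ → ℝ} {t v : ℝ} (ht : t ∈ Icc (0:ℝ) 1) (hv : v ∈ Icc (0:ℝ) 1) :
    CT C t v = C t v := by unfold CT; rw [cl_eq ht, cl_eq hv]

lemma CT_mono1 {C : ℝ → ℝ → ℝ} (hC : IsCopula C) (v : ℝ) :
    Monotone (fun t => CT C t v) := fun a b h =>
  mono1 hC (cl_mem a) (cl_mem b) (cl_mem v) (cl_mono h)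

lemma CT_lip1 {C : ℝ → ℝ → ℝ} (hC : IsCopula C) (v : ℝ) :
    ∀ ⦃a b : ℝ⦄, a ≤ b → CT C b v - CT C a v ≤ b - a := fun a b h =>
  le_trans (lip1 hC (cl_mem a) (cl_mem b) (cl_mem v) (cl_mono h)) (cl_lip h)

lemma CT_mono2 {C : ℝ → ℝ → ℝ} (hC : IsCopula C) (t : ℝ) :
    Monotone (fun v => CT C t v) := fun a b h =>
  mono2 hC (cl_mem t) (cl_mem a) (cl_mem b) (cl_mono h)

lemma CT_lip2 {C : ℝ → ℝ → ℝ} (hC : IsCopula C) (t : ℝ) :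
    ∀ ⦃a b : ℝ⦄, a ≤ b → CT C t b - CT C t a ≤ b - a := fun a b h =>
  le_trans (lip2 hC (cl_mem t) (cl_mem a) (cl_mem b) (cl_mono h)) (cl_lip h)

lemma CT_cont {C : ℝ → ℝ → ℝ} (hC : IsCopula C) :
    Continuous (Function.uncurry fun t v => CT C t v) := by
  have key : ∀ p q : ℝ × ℝ, CT C p.1 p.2 - CT C q.1 q.2 ≤ |p.1 - q.1| + |p.2 - q.2| := by
    intro p q
    have h1 : CT C p.1 p.2 - CT C q.1 p.2 ≤ |p.1 - q.1| := by
      rcases le_total q.1 p.1 with h | h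
      · exact le_trans (CT_lip1 hC p.2 h) (le_abs_self _)
      · have := CT_mono1 hC p.2 h
        have := abs_nonneg (p.1 - q.1)
        simp only at *
        linarith
    have h2 : CT C q.1 p.2 - CT C q.1 q.2 ≤ |p.2 - q.2| := by
      rcases le_total q.2 p.2 with h | h
      · exact le_trans (CT_lip2 hC q.1 h) (le_abs_self _)
      · have := CT_mono2 hC q.1 h
        have := abs_nonneg (p.2 - q.2)
        simp only at *
        linarith
    linarith
  have hlip : LipschitzWith 2 (Function.uncurry fun t v => CT C t v) := by
    apply LipschitzWith.of_dist_le_mul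
    intro p q
    rw [Real.dist_eq, Prod.dist_eq, Real.dist_eq, Real.dist_eq]
    have k1 := key p q
    have k2 := key q p
    have h1 : |p.1 - q.1| ≤ max |p.1 - q.1| |p.2 - q.2| := le_max_left _ _
    have h2 : |p.2 - q.2| ≤ max |p.1 - q.1| |p.2 - q.2| := le_max_right _ _
    have habs : |(Function.uncurry fun t v => CT C t v) p - (Function.uncurry fun t v => CT C t v) q|
        ≤ |p.1 - q.1| + |p.2 - q.2| := by
      rw [abs_sub_le_iff]
      constructor
      · simpa [Function.uncurry] using k1
      · have : |q.1 - p.1| + |q.2 - p.2| = |p.1 - q.1| + |p.2 - q.2| := by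
          rw [abs_sub_comm q.1, abs_sub_comm q.2]
        simpa [Function.uncurry, this] using k2
    push_cast
    linarith
  exact hlip.continuous

/-- Elementary inequality for antitone functions with values in `[0,1]`. -/
lemma anti_sq {G : ℝ → ℝ} (hG : Antitone G) (hG0 : ∀ t, 0 ≤ G t) (hG1 : ∀ t, G t ≤ 1)
    {v : ℝ} (hv : v ∈ Icc (0:ℝ) 1) (hGv : ∫ t in (0:ℝ)..1, G t ≤ v) :
    ∫ t in (0:ℝ)..1, (G t) ^ 2 ≤ ∫ t in (0:ℝ)..v, G t := by
  set c := G v with hc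
  have hc0 : 0 ≤ c := hG0 v
  have hGsq : Antitone (fun t => (G t) ^ 2) := by
    intro x y h
    simp only [pow_two]
    exact mul_le_mul (hG h) (hG h) (hG0 y) (hG0 x)
  have hint : ∀ a b : ℝ, IntervalIntegrable G volume a b := fun a b => hG.intervalIntegrable
  have hintsq : ∀ a b : ℝ, IntervalIntegrable (fun t => (G t)^2) volume a b :=
    fun a b => hGsq.intervalIntegrable
  have hsplit : (∫ t in (0:ℝ)..v, (G t)^2) + ∫ t in v..1, (G t)^2 = ∫ t in (0:ℝ)..1, (G t)^2 :=
    intervalIntegral.integral_add_adjacent_intervals (hintsq _ _) (hintsq _ _)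
  have hsplitG : (∫ t in (0:ℝ)..v, G t) + ∫ t in v..1, G t = ∫ t in (0:ℝ)..1, G t :=
    intervalIntegral.integral_add_adjacent_intervals (hint _ _) (hint _ _)
  have claim1 : ∫ t in v..1, (G t)^2 ≤ c * ∫ t in v..1, G t := by
    rw [← intervalIntegral.integral_const_mul]
    apply intervalIntegral.integral_mono_on hv.2 (hintsq _ _)
    · exact (hint _ _).const_mul c
    · intro t ht
      simp only [pow_two]
      exact mul_le_mul_of_nonneg_right (hG ht.1) (hG0 t)
  have claim2 : ∫ t in (0:ℝ)..v, (G t)^2 ≤ (∫ t in (0:ℝ)..v, G t) - c * (v - ∫ t in (0:ℝ)..v, G t) := by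
    have hrhs : IntervalIntegrable (fun t => (1 + c) * G t - c) volume 0 v :=
      ((hint 0 v).const_mul (1+c)).sub intervalIntegrable_const
    have hpt : ∀ t ∈ Icc (0:ℝ) v, (G t)^2 ≤ (1 + c) * G t - c := by
      intro t ht
      have h1 : c ≤ G t := hG ht.2
      have h2 : G t ≤ 1 := hG1 t
      nlinarith [mul_nonneg (sub_nonneg.2 h1) (sub_nonneg.2 h2)]
    calc ∫ t in (0:ℝ)..v, (G t)^2 ≤ ∫ t in (0:ℝ)..v, ((1 + c) * G t - c) :=
          intervalIntegral.integral_mono_on hv.1 (hintsq _ _) hrhs hpt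
      _ = (1 + c) * (∫ t in (0:ℝ)..v, G t) - c * v := by
          rw [intervalIntegral.integral_sub ((hint 0 v).const_mul (1+c)) intervalIntegrable_const,
            intervalIntegral.integral_const_mul, intervalIntegral.integral_const, smul_eq_mul]
          ring
      _ = (∫ t in (0:ℝ)..v, G t) - c * (v - ∫ t in (0:ℝ)..v, G t) := by ring
  have claim3 : c * ∫ t in v..1, G t ≤ c * (v - ∫ t in (0:ℝ)..v, G t) := by
    apply mul_le_mul_of_nonneg_left _ hc0
    linarith
  linarith

end SIAux

open SIAux

lemma ae_ne_real (c : ℝ) : ∀ᵐ t : ℝ, t ≠ c := by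
  have h : (volume : Measure ℝ) {c} = 0 := measure_singleton c
  rw [ae_iff]
  convert h using 2
  ext x; simp

/-- Every stochastically increasing bivariate copula satisfies
`ξ(C) ≤ (3/4)·τ(C) + 1/4`. -/
theorem xi_le_tau_bound_of_SI (C : ℝ → ℝ → ℝ) (hC : IsCopula C) (hSI : IsSI C) :
    xi C ≤ 3 / 4 * tau C + 1 / 4 := by
  have h0Icc : (0:ℝ) ∈ Icc (0:ℝ) 1 := ⟨le_refl 0, zero_le_one⟩
  have h1Icc : (1:ℝ) ∈ Icc (0:ℝ) 1 := ⟨zero_le_one, le_refl 1⟩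
  -- the diagonal of the clamped copula
  have hφmono : Monotone (fun t => CT C t t) := fun a b h =>
    le_trans (CT_mono1 hC a h) (CT_mono2 hC b h)
  have hφint : ∀ a b : ℝ, IntervalIntegrable (fun t => CT C t t) volume a b :=
    fun a b => hφmono.intervalIntegrable
  have hφmem : ∀ t : ℝ, CT C t t ∈ Icc (0:ℝ) 1 := fun t => hC.1 _ (cl_mem t) _ (cl_mem t)
  have hφle : ∀ t ∈ Icc (0:ℝ) 1, CT C t t ≤ t := by
    intro t ht
    have h1 : CT C t t = C t t := CT_eq ht ht
    have h2 : C t t ≤ C t 1 := mono2 hC ht ht h1Icc ht.2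
    have h3 : C t 1 = t := (hC.2.1 t ht).2
    linarith
  set S : ℝ := ∫ t in (0:ℝ)..1, CT C t t with hSdef
  have hS0 : 0 ≤ S :=
    intervalIntegral.integral_nonneg zero_le_one (fun t _ => (hφmem t).1)
  have hShalf : S ≤ 1/2 := by
    have h1 : S ≤ ∫ t in (0:ℝ)..1, t :=
      intervalIntegral.integral_mono_on zero_le_one (hφint 0 1)
        (continuous_id'.intervalIntegrable 0 1) hφle
    have h2 : (∫ t in (0:ℝ)..1, t) = 1/2 := by
      rw [integral_id]; norm_num
    linarith
  -- d1 facts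
  have hd1meas : ∀ v, Measurable (fun t => d1 C t v) := fun v =>
    measurable_deriv (fun s => C s v)
  have hd1eq : ∀ v ∈ Icc (0:ℝ) 1, ∀ t ∈ Ioo (0:ℝ) 1,
      d1 C t v = deriv (fun s => CT C s v) t := by
    intro v hv t ht
    apply Filter.EventuallyEq.deriv_eq
    filter_upwards [isOpen_Ioo.mem_nhds ht] with s hs
    exact (CT_eq ⟨hs.1.le, hs.2.le⟩ hv).symm
  have hd1mem : ∀ v ∈ Icc (0:ℝ) 1, ∀ t ∈ Ioo (0:ℝ) 1, d1 C t v ∈ Icc (0:ℝ) 1 := by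
    intro v hv t ht
    rw [hd1eq v hv t ht]
    exact deriv_mem (CT_mono1 hC v) (CT_lip1 hC v) t
  have hftc1 : ∀ v ∈ Icc (0:ℝ) 1, ∀ a b : ℝ, 0 ≤ a → a ≤ b → b ≤ 1 →
      ∫ t in Ioc a b, d1 C t v ≤ C b v - C a v := by
    intro v hv a b ha hab hb1
    have hcongr : ∫ t in Ioc a b, d1 C t v = ∫ t in Ioc a b, deriv (fun s => CT C s v) t := by
      apply setIntegral_congr_ae measurableSet_Ioc
      filter_upwards [ae_ne_real 1] with t ht1 htmem
      exact hd1eq v hv t ⟨lt_of_le_of_lt ha htmem.1,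
        lt_of_le_of_ne (le_trans htmem.2 hb1) ht1⟩
    rw [hcongr]
    have h := integral_deriv_le_core (CT_mono1 hC v) (CT_lip1 hC v) hab
    rwa [CT_eq ⟨le_trans ha hab, hb1⟩ hv, CT_eq ⟨ha, le_trans hab hb1⟩ hv] at h
  -- d2 facts via the clamped derivative D
  set D : ℝ → ℝ → ℝ := fun t v => deriv (fun s => CT C t s) v with hDdef
  have hDmeas : Measurable (fun p : ℝ × ℝ => D p.1 p.2) :=
    measurable_deriv_with_param (CT_cont hC)
  have hDmem : ∀ t v, D t v ∈ Icc (0:ℝ) 1 := fun t v =>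
    deriv_mem (CT_mono2 hC t) (CT_lip2 hC t) v
  have hDftc : ∀ t : ℝ, ∀ a b : ℝ, a ≤ b →
      ∫ v in Ioc a b, D t v ≤ CT C t b - CT C t a := fun t a b hab =>
    integral_deriv_le_core (CT_mono2 hC t) (CT_lip2 hC t) hab
  have hd2eq : ∀ v ∈ Ioo (0:ℝ) 1, ∀ t ∈ Icc (0:ℝ) 1, d2 C t v = D t v := by
    intro v hv t ht
    apply Filter.EventuallyEq.deriv_eq
    filter_upwards [isOpen_Ioo.mem_nhds hv] with s hs
    exact (CT_eq ht ⟨hs.1.le, hs.2.le⟩).symm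
  -- the restricted measure
  set μ1 : Measure ℝ := volume.restrict (Ioc (0:ℝ) 1) with hμ1
  have hμ1univ : μ1 univ = 1 := by
    rw [hμ1, Measure.restrict_apply_univ, Real.volume_Ioc]
    norm_num
  haveI : IsFiniteMeasure μ1 := ⟨by rw [hμ1univ]; exact ENNReal.one_lt_top⟩
  have haeIoo : ∀ᵐ t ∂μ1, t ∈ Ioo (0:ℝ) 1 := by
    have h2 : ∀ᵐ t ∂μ1, t ∈ Ioc (0:ℝ) 1 := ae_restrict_mem measurableSet_Ioc
    filter_upwards [h2, ae_restrict_of_ae (ae_ne_real 1)] with t ht hne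
    exact ⟨ht.1, lt_of_le_of_ne ht.2 hne⟩
  -- STEP I (uses SI)
  have stepI : ∀ v ∈ Icc (0:ℝ) 1,
      (∫ t in (0:ℝ)..1, (d1 C t v) ^ 2) ≤ CT C v v := by
    intro v hv
    obtain ⟨g0, hg0anti, hg0ae⟩ := hSI v hv
    set G : ℝ → ℝ := fun t => cl (g0 (cl t)) with hGdef
    have hGanti : Antitone G := fun x y h =>
      cl_mono (hg0anti (cl_mem x) (cl_mem y) (cl_mono h))
    have hG0 : ∀ t, 0 ≤ G t := fun t => (cl_mem _).1
    have hG1 : ∀ t, G t ≤ 1 := fun t => (cl_mem _).2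
    have haeG : ∀ᵐ t ∂μ1, d1 C t v = G t := by
      have h1 : ∀ᵐ t ∂μ1, d1 C t v = g0 t := by
        rw [hμ1]
        exact ae_restrict_of_ae_restrict_of_subset Ioc_subset_Icc_self hg0ae
      filter_upwards [h1, haeIoo] with t h1t hIoo
      have hmem : d1 C t v ∈ Icc (0:ℝ) 1 := hd1mem v hv t hIoo
      show d1 C t v = cl (g0 (cl t))
      rw [cl_eq ⟨hIoo.1.le, hIoo.2.le⟩, ← h1t, cl_eq hmem]
    have e1 : ∫ t in (0:ℝ)..1, (d1 C t v) ^ 2 = ∫ t in (0:ℝ)..1, (G t) ^ 2 := by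
      rw [intervalIntegral.integral_of_le zero_le_one,
        intervalIntegral.integral_of_le zero_le_one]
      exact integral_congr_ae (haeG.mono fun t ht => by show (d1 C t v)^2 = (G t)^2; rw [ht])
    have e2 : (∫ t in (0:ℝ)..1, G t) = ∫ t in Ioc (0:ℝ) 1, d1 C t v := by
      rw [intervalIntegral.integral_of_le zero_le_one]
      exact integral_congr_ae (haeG.mono fun t ht => ht.symm)
    have hGv : ∫ t in (0:ℝ)..1, G t ≤ v := by
      rw [e2]
      have h := hftc1 v hv 0 1 le_rfl zero_le_one le_rfl
      rw [(hC.2.2.1 v hv).2, (hC.2.2.1 v hv).1] at h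
      linarith
    have key := anti_sq hGanti hG0 hG1 hv hGv
    have e3 : (∫ t in (0:ℝ)..v, G t) ≤ CT C v v := by
      have hsub : Ioc (0:ℝ) v ⊆ Ioc 0 1 := Ioc_subset_Ioc le_rfl hv.2
      have haeG' : ∀ᵐ t ∂(volume.restrict (Ioc (0:ℝ) v)), d1 C t v = G t := by
        apply ae_restrict_of_ae_restrict_of_subset hsub
        rw [← hμ1]; exact haeG
      rw [intervalIntegral.integral_of_le hv.1]
      calc (∫ t in Ioc (0:ℝ) v, G t) = ∫ t in Ioc (0:ℝ) v, d1 C t v :=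
            integral_congr_ae (haeG'.mono fun t ht => ht.symm)
        _ ≤ C v v - C 0 v := hftc1 v hv 0 v le_rfl hv.1 hv.2
        _ = CT C v v := by rw [(hC.2.2.1 v hv).1, CT_eq hv hv]; ring
    rw [e1]
    exact key.trans e3
  -- STEP II machinery
  set FF : ℝ × ℝ → ℝ := fun p => if p.2 ≤ p.1 then D p.2 p.1 else 0 with hFFdef
  have hFFmeas : Measurable FF := by
    apply Measurable.ite (measurableSet_le measurable_snd measurable_fst)
    · exact hDmeas.comp measurable_swap
    · exact measurable_const
  have hFF01 : ∀ p, FF p ∈ Icc (0:ℝ) 1 := by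
    intro p
    rw [hFFdef]
    dsimp only
    split_ifs
    · exact hDmem _ _
    · exact ⟨le_refl 0, zero_le_one⟩
  set ev : ℝ → ℝ := fun v => ∫ t, FF (v, t) ∂μ1 with hevdef
  have hFFint : Integrable FF (μ1.prod μ1) := by
    constructor
    · exact hFFmeas.aestronglyMeasurable
    · apply HasFiniteIntegral.of_bounded (C := 1)
      refine Eventually.of_forall fun p => ?_
      rw [Real.norm_eq_abs, abs_le]
      exact ⟨by linarith [(hFF01 p).1], (hFF01 p).2⟩
  have hev0 : ∀ v, 0 ≤ ev v := fun v => integral_nonneg fun t => (hFF01 _).1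
  have hev1 : ∀ v, ev v ≤ 1 := by
    intro v
    have h := norm_integral_le_of_norm_le_const (μ := μ1)
      (f := fun t => FF (v, t)) (C := 1)
      (Eventually.of_forall fun t => by
        rw [Real.norm_eq_abs, abs_le]
        exact ⟨by linarith [(hFF01 (v, t)).1], (hFF01 (v, t)).2⟩)
    rw [measureReal_def, hμ1univ] at h
    simp only [ENNReal.toReal_one, mul_one] at h
    calc ev v ≤ |ev v| := le_abs_self _
      _ ≤ 1 := h
  have hevmeas : StronglyMeasurable ev := hFFmeas.stronglyMeasurable.integral_prod_right'
  have hinner : ∀ t ∈ Ioc (0:ℝ) 1, (∫ v, FF (v, t) ∂μ1) ≤ t - CT C t t := by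
    intro t ht
    have htIcc : t ∈ Icc (0:ℝ) 1 := ⟨ht.1.le, ht.2⟩
    have e1 : ∀ v : ℝ, FF (v, t) = (Ici t).indicator (fun w => D t w) v := by
      intro v
      rw [Set.indicator_apply]
      simp only [mem_Ici]
      rfl
    calc (∫ v, FF (v, t) ∂μ1) = ∫ v, (Ici t).indicator (fun w => D t w) v ∂μ1 := by
          exact integral_congr_ae (Eventually.of_forall fun v => e1 v)
      _ = ∫ v in Ici t, D t v ∂μ1 := integral_indicator measurableSet_Ici
      _ = ∫ v in Icc t 1, D t v := by
          rw [hμ1, Measure.restrict_restrict measurableSet_Ici]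
          have hset : Ici t ∩ Ioc (0:ℝ) 1 = Icc t 1 := by
            ext x
            simp only [mem_inter_iff, mem_Ici, mem_Ioc, mem_Icc]
            constructor
            · rintro ⟨h1, _, h3⟩; exact ⟨h1, h3⟩
            · rintro ⟨h1, h2⟩; exact ⟨h1, lt_of_lt_of_le ht.1 h1, h2⟩
          rw [hset]
      _ = ∫ v in Ioc t 1, D t v := integral_Icc_eq_integral_Ioc
      _ ≤ CT C t 1 - CT C t t := hDftc t t 1 ht.2
      _ = t - CT C t t := by
          rw [CT_eq htIcc h1Icc, (hC.2.1 t htIcc).2]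
  have hswap : (∫ v, ev v ∂μ1) = ∫ t, (∫ v, FF (v, t) ∂μ1) ∂μ1 := by
    rw [hevdef]
    exact integral_integral_swap (f := fun v t => FF (v, t)) hFFint
  have hevint_le : (∫ v, ev v ∂μ1) ≤ 1/2 - S := by
    rw [hswap]
    have hIntInner : Integrable (fun t => ∫ v, FF (v, t) ∂μ1) μ1 := hFFint.integral_prod_right
    have hid_int : Integrable (fun t : ℝ => t) μ1 := by
      rw [hμ1]
      exact (intervalIntegrable_iff_integrableOn_Ioc_of_le zero_le_one).1
        (continuous_id'.intervalIntegrable 0 1)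
    have hφ_int : Integrable (fun t => CT C t t) μ1 := by
      rw [hμ1]
      exact (intervalIntegrable_iff_integrableOn_Ioc_of_le zero_le_one).1 (hφint 0 1)
    have hRHSint : Integrable (fun t => t - CT C t t) μ1 := hid_int.sub hφ_int
    have h1 : (∫ t, (∫ v, FF (v, t) ∂μ1) ∂μ1) ≤ ∫ t, (t - CT C t t) ∂μ1 := by
      apply integral_mono_ae hIntInner hRHSint
      filter_upwards [ae_restrict_mem measurableSet_Ioc] with t ht
      exact hinner t ht
    have h2 : (∫ t, (t - CT C t t) ∂μ1) = 1/2 - S := by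
      have e0 : (∫ t, (t - CT C t t) ∂μ1) = ∫ t in (0:ℝ)..1, (t - CT C t t) := by
        rw [intervalIntegral.integral_of_le zero_le_one, hμ1]
      rw [e0, intervalIntegral.integral_sub (continuous_id'.intervalIntegrable 0 1) (hφint 0 1),
        integral_id, hSdef]
      norm_num
    linarith
  -- STEP II pointwise in v
  have stepII : ∀ v ∈ Ioo (0:ℝ) 1,
      (∫ u in (0:ℝ)..1, d1 C u v * d2 C u v) ≤ (v - CT C v v) + ev v := by
    intro v hv
    have hvIcc : v ∈ Icc (0:ℝ) 1 := ⟨hv.1.le, hv.2.le⟩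
    have hvφ : CT C v v ≤ v := hφle v hvIcc
    by_cases hint : IntervalIntegrable (fun u => d1 C u v * d2 C u v) volume 0 1
    · have hintOn : Integrable (fun u => d1 C u v * d2 C u v) μ1 := by
        rw [hμ1]
        exact (intervalIntegrable_iff_integrableOn_Ioc_of_le zero_le_one).1 hint
      have hR1int : Integrable (fun u => d1 C u v) μ1 := by
        rw [hμ1]
        apply Measure.integrableOn_of_bounded (M := 1)
        · rw [Real.volume_Ioc]; exact ENNReal.ofReal_ne_top
        · exact (hd1meas v).aestronglyMeasurable
        · rw [← hμ1]
          filter_upwards [haeIoo] with t ht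
          have hmem := hd1mem v hvIcc t ht
          rw [Real.norm_eq_abs, abs_le]
          exact ⟨by linarith [hmem.1], hmem.2⟩
      have hIndint : Integrable ((Ioi v).indicator (fun u => d1 C u v)) μ1 :=
        hR1int.indicator measurableSet_Ioi
      have hIfmeas : Measurable (fun t => if t ≤ v then D t v else 0) := by
        apply Measurable.ite (measurableSet_le measurable_id measurable_const)
        · exact hDmeas.comp (measurable_id.prodMk measurable_const)
        · exact measurable_const
      have hIfint : Integrable (fun t => if t ≤ v then D t v else 0) μ1 := by
        rw [hμ1]
        apply Measure.integrableOn_of_bounded (M := 1)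
        · rw [Real.volume_Ioc]; exact ENNReal.ofReal_ne_top
        · exact hIfmeas.aestronglyMeasurable
        · refine Eventually.of_forall fun t => ?_
          rw [Real.norm_eq_abs, abs_le]
          constructor
          · split_ifs with h
            · linarith [(hDmem t v).1]
            · norm_num
          · split_ifs with h
            · exact (hDmem t v).2
            · norm_num
      have hptws : ∀ᵐ t ∂μ1, d1 C t v * d2 C t v
          ≤ (Ioi v).indicator (fun u => d1 C u v) t + (if t ≤ v then D t v else 0) := by
        filter_upwards [haeIoo, ae_restrict_of_ae (ae_ne_real v)] with t hIoo htv
        have htIcc : t ∈ Icc (0:ℝ) 1 := ⟨hIoo.1.le, hIoo.2.le⟩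
        have hf := hd1mem v hvIcc t hIoo
        have hgD : d2 C t v = D t v := hd2eq v hv t htIcc
        have hgmem := hDmem t v
        rcases lt_or_gt_of_ne htv with hlt | hgt
        · have hind : (Ioi v).indicator (fun u => d1 C u v) t = 0 := by
            apply indicator_of_notMem
            simp only [mem_Ioi, not_lt]
            exact hlt.le
          rw [hind, if_pos hlt.le, hgD, zero_add]
          calc d1 C t v * D t v ≤ 1 * D t v :=
                mul_le_mul_of_nonneg_right hf.2 hgmem.1
            _ = D t v := one_mul _
        · have hind : (Ioi v).indicator (fun u => d1 C u v) t = d1 C t v :=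
            indicator_of_mem (mem_Ioi.2 hgt) _
          rw [hind, if_neg (not_le.2 hgt), hgD, add_zero]
          calc d1 C t v * D t v ≤ d1 C t v * 1 :=
                mul_le_mul_of_nonneg_left hgmem.2 hf.1
            _ = d1 C t v := mul_one _
      have hmono1 : (∫ u in (0:ℝ)..1, d1 C u v * d2 C u v)
          ≤ ∫ t, ((Ioi v).indicator (fun u => d1 C u v) t + (if t ≤ v then D t v else 0)) ∂μ1 := by
        rw [intervalIntegral.integral_of_le zero_le_one, ← hμ1]
        exact integral_mono_ae hintOn (hIndint.add hIfint) hptws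
      have hsplit : (∫ t, ((Ioi v).indicator (fun u => d1 C u v) t
            + (if t ≤ v then D t v else 0)) ∂μ1)
          = (∫ t, (Ioi v).indicator (fun u => d1 C u v) t ∂μ1)
            + ∫ t, (if t ≤ v then D t v else 0) ∂μ1 :=
        integral_add hIndint hIfint
      have hpart1 : (∫ t, (Ioi v).indicator (fun u => d1 C u v) t ∂μ1) ≤ v - CT C v v := by
        rw [integral_indicator measurableSet_Ioi, hμ1,
          Measure.restrict_restrict measurableSet_Ioi]
        have hseteq : Ioi v ∩ Ioc (0:ℝ) 1 = Ioc v 1 := by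
          ext x
          simp only [mem_inter_iff, mem_Ioi, mem_Ioc]
          constructor
          · rintro ⟨h1, _, h3⟩; exact ⟨h1, h3⟩
          · rintro ⟨h1, h2⟩; exact ⟨h1, lt_trans hv.1 h1, h2⟩
        rw [hseteq]
        have h := hftc1 v hvIcc v 1 hv.1.le hv.2.le le_rfl
        rw [(hC.2.2.1 v hvIcc).2] at h
        rw [CT_eq hvIcc hvIcc]
        exact h
      have hpart2 : (∫ t, (if t ≤ v then D t v else 0) ∂μ1) = ev v := rfl
      calc (∫ u in (0:ℝ)..1, d1 C u v * d2 C u v)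
          ≤ (∫ t, (Ioi v).indicator (fun u => d1 C u v) t ∂μ1)
            + ∫ t, (if t ≤ v then D t v else 0) ∂μ1 := by rw [← hsplit]; exact hmono1
        _ ≤ (v - CT C v v) + ev v := by
            rw [hpart2]
            exact add_le_add_left hpart1 _
    · rw [intervalIntegral.integral_undef hint]
      have := hev0 v
      linarith
  -- bound on B
  set B : ℝ := ∫ v in (0:ℝ)..1, ∫ u in (0:ℝ)..1, d1 C u v * d2 C u v with hBdef
  have hBle : B ≤ 1 - 2 * S := by
    by_cases hBi : IntervalIntegrable
        (fun v => ∫ u in (0:ℝ)..1, d1 C u v * d2 C u v) volume 0 1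
    · have hevII : IntervalIntegrable ev volume 0 1 := by
        rw [intervalIntegrable_iff_integrableOn_Ioc_of_le zero_le_one]
        apply Measure.integrableOn_of_bounded (M := 1)
        · rw [Real.volume_Ioc]; exact ENNReal.ofReal_ne_top
        · exact hevmeas.aestronglyMeasurable
        · refine Eventually.of_forall fun t => ?_
          rw [Real.norm_eq_abs, abs_le]
          exact ⟨by linarith [hev0 t], hev1 t⟩
      have hRint : IntervalIntegrable (fun v => (v - CT C v v) + ev v) volume 0 1 :=
        (((continuous_id'.intervalIntegrable 0 1).sub (hφint 0 1)).add hevII)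
      have h1 : B ≤ ∫ v in (0:ℝ)..1, ((v - CT C v v) + ev v) := by
        rw [hBdef]
        apply intervalIntegral.integral_mono_ae_restrict zero_le_one hBi hRint
        have haeIcc : ∀ᵐ t ∂(volume.restrict (Icc (0:ℝ) 1)), t ∈ Ioo (0:ℝ) 1 := by
          filter_upwards [ae_restrict_mem measurableSet_Icc,
            ae_restrict_of_ae (ae_ne_real 0), ae_restrict_of_ae (ae_ne_real 1)] with t ht h0 h1
          exact ⟨lt_of_le_of_ne ht.1 (Ne.symm h0), lt_of_le_of_ne ht.2 h1⟩
        filter_upwards [haeIcc] with v hvIoo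
        exact stepII v hvIoo
      have h2 : (∫ v in (0:ℝ)..1, ((v - CT C v v) + ev v))
          = (1/2 - S) + ∫ v in (0:ℝ)..1, ev v := by
        rw [intervalIntegral.integral_add
            ((continuous_id'.intervalIntegrable 0 1).sub (hφint 0 1)) hevII,
          intervalIntegral.integral_sub (continuous_id'.intervalIntegrable 0 1) (hφint 0 1),
          integral_id, hSdef]
        norm_num
      have h3 : (∫ v in (0:ℝ)..1, ev v) ≤ 1/2 - S := by
        rw [intervalIntegral.integral_of_le zero_le_one, ← hμ1]
        exact hevint_le
      linarith
    · rw [hBdef, intervalIntegral.integral_undef hBi]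
      linarith
  -- bound on the xi double integral
  have hX : (∫ v in (0:ℝ)..1, ∫ t in (0:ℝ)..1, (d1 C t v) ^ 2) ≤ S := by
    by_cases hXi : IntervalIntegrable
        (fun v => ∫ t in (0:ℝ)..1, (d1 C t v) ^ 2) volume 0 1
    · rw [hSdef]
      exact intervalIntegral.integral_mono_on zero_le_one hXi (hφint 0 1) stepI
    · rw [intervalIntegral.integral_undef hXi]
      exact hS0
  -- conclusion
  show 6 * (∫ v in (0:ℝ)..1, ∫ t in (0:ℝ)..1, (d1 C t v) ^ 2) - 2
      ≤ 3 / 4 * (1 - 4 * B) + 1 / 4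
  linarith
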